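/- Let x > γ/β and y > 0, and let S, I be the SIR solution with initial data (x, y). Then v(x, y) ≤ [ln x − ln(γ/β) − ln y + ln(x − γ/β + y − (γ/β)(ln x − ln(γ/β)))] / [β (y + x (1 − (γ/β) (ln x − ln(γ/β))/(x − γ/β)))] and v(x, y) ≥ [ln x − ln(γ/β) − ln y + ln(x − γ/β + y + (γ/β)(γ/(β x) − 1))] / [β (x − γ/β + y)]. -/

import Mathlib

open Set Filter

/-- An SIR solution with parameters β, γ and initial data (x, y):
differentiable functions S, I on [0,∞) with S' = -βSI, I' = βSI - γI,
S(0) = x, I(0) = y. -/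
def IsSIRSolution (β γ x y : ℝ) (S I : ℝ → ℝ) : Prop :=
  S 0 = x ∧ I 0 = y ∧
  ∀ t, 0 ≤ t →
    HasDerivWithinAt S (-(β * S t * I t)) (Set.Ici 0) t ∧
    HasDerivWithinAt I (β * S t * I t - γ * I t) (Set.Ici 0) t


private lemma sir_deriv_aux (β A k v : ℝ) (S I : ℝ → ℝ)
    (hdS : ∀ t ∈ Set.Ioo 0 v, HasDerivAt S (-(β * S t * I t)) t)
    (hSpos : ∀ t ∈ Set.Icc 0 v, 0 < S t)
    (hden : ∀ t ∈ Set.Icc 0 v, 0 < A - k * S t) :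
    ∀ t ∈ Set.Ioo 0 v,
      HasDerivAt (fun u => Real.log (S u) - Real.log (A - k * S u) + β * A * u)
        (β * A * (1 - I t / (A - k * S t))) t := by
  intro t ht
  have hS0' : S t ≠ 0 := (hSpos t (Ioo_subset_Icc_self ht)).ne'
  have hd : A - k * S t ≠ 0 := (hden t (Ioo_subset_Icc_self ht)).ne'
  have h1 : HasDerivAt (fun u => A - k * S u) (-(k * -(β * S t * I t))) t :=
    ((hdS t ht).const_mul k).const_sub A
  have h2 : HasDerivAt (fun u : ℝ => β * A * u) (β * A) t := by
    simpa using (hasDerivAt_id t).const_mul (β * A)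
  have h3 := (((hdS t ht).log hS0').sub (h1.log hd)).add h2
  refine h3.congr_deriv ?_
  symm
  field_simp
  ring

private lemma sir_cont_aux (β A k v : ℝ) (S : ℝ → ℝ)
    (hScont : ContinuousOn S (Set.Icc 0 v))
    (hSpos : ∀ t ∈ Set.Icc 0 v, 0 < S t)
    (hden : ∀ t ∈ Set.Icc 0 v, 0 < A - k * S t) :
    ContinuousOn (fun u => Real.log (S u) - Real.log (A - k * S u) + β * A * u)
      (Set.Icc 0 v) := by
  refine ContinuousOn.add (ContinuousOn.sub ?_ ?_) ?_
  · exact hScont.log fun t ht => (hSpos t ht).ne'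
  · exact (continuousOn_const.sub (continuousOn_const.mul hScont)).log
      fun t ht => (hden t ht).ne'
  · exact (continuous_const.mul continuous_id).continuousOn

private lemma sir_mono_aux (β A k v : ℝ) (S I : ℝ → ℝ) (hβ : 0 < β) (hA : 0 < A) (hv : 0 ≤ v)
    (hdS : ∀ t ∈ Set.Ioo 0 v, HasDerivAt S (-(β * S t * I t)) t)
    (hScont : ContinuousOn S (Set.Icc 0 v))
    (hSpos : ∀ t ∈ Set.Icc 0 v, 0 < S t)
    (hden : ∀ t ∈ Set.Icc 0 v, 0 < A - k * S t)
    (hcmp : ∀ t ∈ Set.Icc 0 v, I t ≤ A - k * S t) :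
    Real.log (S 0) - Real.log (A - k * S 0) ≤
      Real.log (S v) - Real.log (A - k * S v) + β * A * v := by
  have hgd := sir_deriv_aux β A k v S I hdS hSpos hden
  have hdiff : DifferentiableOn ℝ
      (fun u => Real.log (S u) - Real.log (A - k * S u) + β * A * u)
      (interior (Set.Icc 0 v)) := by
    rw [interior_Icc]
    exact fun t ht => (hgd t ht).differentiableAt.differentiableWithinAt
  have hderiv : ∀ t ∈ interior (Set.Icc 0 v),
      0 ≤ deriv (fun u => Real.log (S u) - Real.log (A - k * S u) + β * A * u) t := by
    rw [interior_Icc]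
    intro t ht
    rw [(hgd t ht).deriv]
    have h1 : I t / (A - k * S t) ≤ 1 :=
      (div_le_one (hden t (Ioo_subset_Icc_self ht))).2 (hcmp t (Ioo_subset_Icc_self ht))
    nlinarith [mul_pos hβ hA]
  have hmono := monotoneOn_of_deriv_nonneg (convex_Icc 0 v)
    (sir_cont_aux β A k v S hScont hSpos hden) hdiff hderiv
  have := hmono ⟨le_refl 0, hv⟩ ⟨hv, le_refl v⟩ hv
  simpa using this

private lemma sir_anti_aux (β A k v : ℝ) (S I : ℝ → ℝ) (hβ : 0 < β) (hA : 0 < A) (hv : 0 ≤ v)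
    (hdS : ∀ t ∈ Set.Ioo 0 v, HasDerivAt S (-(β * S t * I t)) t)
    (hScont : ContinuousOn S (Set.Icc 0 v))
    (hSpos : ∀ t ∈ Set.Icc 0 v, 0 < S t)
    (hden : ∀ t ∈ Set.Icc 0 v, 0 < A - k * S t)
    (hcmp : ∀ t ∈ Set.Icc 0 v, A - k * S t ≤ I t) :
    Real.log (S v) - Real.log (A - k * S v) + β * A * v ≤
      Real.log (S 0) - Real.log (A - k * S 0) := by
  have hgd := sir_deriv_aux β A k v S I hdS hSpos hden
  have hdiff : DifferentiableOn ℝ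
      (fun u => Real.log (S u) - Real.log (A - k * S u) + β * A * u)
      (interior (Set.Icc 0 v)) := by
    rw [interior_Icc]
    exact fun t ht => (hgd t ht).differentiableAt.differentiableWithinAt
  have hderiv : ∀ t ∈ interior (Set.Icc 0 v),
      deriv (fun u => Real.log (S u) - Real.log (A - k * S u) + β * A * u) t ≤ 0 := by
    rw [interior_Icc]
    intro t ht
    rw [(hgd t ht).deriv]
    have h1 : 1 ≤ I t / (A - k * S t) :=
      (one_le_div (hden t (Ioo_subset_Icc_self ht))).2 (hcmp t (Ioo_subset_Icc_self ht))
    nlinarith [mul_pos hβ hA]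
  have hanti := antitoneOn_of_deriv_nonpos (convex_Icc 0 v)
    (sir_cont_aux β A k v S hScont hSpos hden) hdiff hderiv
  have := hanti ⟨le_refl 0, hv⟩ ⟨hv, le_refl v⟩ hv
  simpa using this

set_option maxHeartbeats 1000000 in
theorem stmt_16 (β γ x y : ℝ) (hβ : 0 < β) (hγ : 0 < γ)
    (hx : γ / β < x) (hy : 0 < y)
    (S I : ℝ → ℝ) (hSI : IsSIRSolution β γ x y S I)
    (v : ℝ) (hv : IsLeast {t : ℝ | 0 ≤ t ∧ S t ≤ γ / β} v) :
    v ≤ (Real.log x - Real.log (γ / β) - Real.log y +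
          Real.log (x - γ / β + y - (γ / β) * (Real.log x - Real.log (γ / β)))) /
        (β * (y + x * (1 - (γ / β) * (Real.log x - Real.log (γ / β)) / (x - γ / β)))) ∧
    (Real.log x - Real.log (γ / β) - Real.log y +
          Real.log (x - γ / β + y + (γ / β) * (γ / (β * x) - 1))) /
        (β * (x - γ / β + y)) ≤ v := by
  obtain ⟨hS0, hI0, hD⟩ := hSI
  obtain ⟨⟨hv0, hvle⟩, hvmin⟩ := hv
  set ρ : ℝ := γ / β with hρdef
  have hρ : 0 < ρ := div_pos hγ hβ
  have hx0 : 0 < x := hρ.trans hx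
  have hxρ : 0 < x - ρ := sub_pos.2 hx
  have hβρ : β * ρ = γ := by rw [hρdef]; field_simp
  clear_value ρ
  have hScont : ContinuousOn S (Ici 0) := fun t ht => (hD t ht).1.continuousWithinAt
  have hIcont : ContinuousOn I (Ici 0) := fun t ht => (hD t ht).2.continuousWithinAt
  have hvpos : 0 < v := by
    rcases hv0.eq_or_lt with h | h
    · exfalso; rw [← h, hS0] at hvle; linarith
    · exact h
  have hSgt : ∀ t, 0 ≤ t → t < v → ρ < S t := by
    intro t ht htv
    by_contra h
    exact absurd (hvmin ⟨ht, le_of_not_gt h⟩) (not_le.2 htv)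
  have hSv : S v = ρ := by
    refine le_antisymm hvle ?_
    have hne : (nhdsWithin v (Ioo 0 v)).NeBot := by
      rw [nhdsWithin_Ioo_eq_nhdsLT hvpos]; infer_instance
    have hcw : Tendsto S (nhdsWithin v (Ioo 0 v)) (nhds (S v)) :=
      (hScont v hv0).mono fun t ht => le_of_lt ht.1
    exact ge_of_tendsto hcw (eventually_mem_nhdsWithin.mono fun t ht => (hSgt t ht.1.le ht.2).le)
  -- positivity of I on [0, v]
  have hIpos : ∀ t, 0 ≤ t → t ≤ v → 0 < I t := by
    intro t ht0 htv
    by_contra hcon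
    push_neg at hcon
    set E : Set ℝ := Icc 0 v ∩ I ⁻¹' (Iic 0) with hE
    have hEcl : IsClosed E :=
      (hIcont.mono (fun s hs => hs.1)).preimage_isClosed_of_isClosed isClosed_Icc isClosed_Iic
    have hEne : E.Nonempty := ⟨t, ⟨ht0, htv⟩, hcon⟩
    have hEbd : BddBelow E := ⟨0, fun s hs => hs.1.1⟩
    have hTE : sInf E ∈ E := hEcl.csInf_mem hEne hEbd
    set T := sInf E
    have hT0 : 0 ≤ T := hTE.1.1
    have hTv : T ≤ v := hTE.1.2
    have hIT : I T ≤ 0 := hTE.2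
    have hIlt : ∀ s, 0 ≤ s → s < T → 0 < I s := by
      intro s hs0 hsT
      by_contra h
      push_neg at h
      exact absurd (csInf_le hEbd ⟨⟨hs0, hsT.le.trans hTv⟩, h⟩) (not_le.2 hsT)
    have hmono : MonotoneOn I (Icc 0 T) := by
      apply monotoneOn_of_deriv_nonneg (convex_Icc 0 T) (hIcont.mono fun s hs => hs.1)
      · rw [interior_Icc]
        exact fun s hs => ((hD s hs.1.le).2.hasDerivAt (Ici_mem_nhds hs.1)).differentiableAt.differentiableWithinAt
      · rw [interior_Icc]
        intro s hs
        rw [((hD s hs.1.le).2.hasDerivAt (Ici_mem_nhds hs.1)).deriv]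
        have h1 : ρ < S s := hSgt s hs.1.le (lt_of_lt_of_le hs.2 hTv)
        have h2 : 0 < I s := hIlt s hs.1.le hs.2
        have h3 : γ < β * S s := by
          calc γ = β * ρ := hβρ.symm
          _ < β * S s := by exact mul_lt_mul_of_pos_left h1 hβ
        nlinarith [mul_pos (sub_pos.2 h3) h2]
    have := hmono ⟨le_refl 0, hT0⟩ ⟨hT0, le_refl T⟩ hT0
    rw [hI0] at this
    linarith
  have hSmem : ∀ t, 0 ≤ t → t ≤ v → ρ ≤ S t := by
    intro t ht0 htv
    rcases htv.eq_or_lt with h | h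
    · rw [h, hSv]
    · exact (hSgt t ht0 h).le
  have hSpos : ∀ t, 0 ≤ t → t ≤ v → 0 < S t := fun t ht0 htv => hρ.trans_le (hSmem t ht0 htv)
  have hSc' : ContinuousOn S (Icc 0 v) := hScont.mono fun t ht => ht.1
  -- S is bounded above by x
  have hSanti : AntitoneOn S (Icc 0 v) := by
    apply antitoneOn_of_deriv_nonpos (convex_Icc 0 v) hSc'
    · rw [interior_Icc]
      exact fun t ht => ((hD t ht.1.le).1.hasDerivAt (Ici_mem_nhds ht.1)).differentiableAt.differentiableWithinAt
    · rw [interior_Icc]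
      intro t ht
      rw [((hD t ht.1.le).1.hasDerivAt (Ici_mem_nhds ht.1)).deriv]
      have hh1 := hSpos t ht.1.le ht.2.le
      have hh2 := hIpos t ht.1.le ht.2.le
      nlinarith [mul_pos (mul_pos hβ hh1) hh2]
  have hSle : ∀ t, 0 ≤ t → t ≤ v → S t ≤ x := by
    intro t ht0 htv
    have := hSanti ⟨le_refl 0, hv0⟩ ⟨ht0, htv⟩ ht0
    rwa [hS0] at this
  -- conserved quantity
  have hWd : ∀ t ∈ Ioo (0:ℝ) v, HasDerivAt (fun u => S u + I u - ρ * Real.log (S u)) 0 t := by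
    intro t ht
    have ht0 : (0:ℝ) ≤ t := ht.1.le
    have hdS := (hD t ht0).1.hasDerivAt (Ici_mem_nhds ht.1)
    have hdI := (hD t ht0).2.hasDerivAt (Ici_mem_nhds ht.1)
    have hSne : S t ≠ 0 := (hSpos t ht0 ht.2.le).ne'
    have h := (hdS.add hdI).sub ((hdS.log hSne).const_mul ρ)
    refine h.congr_deriv ?_
    symm
    have hdiv : -(β * S t * I t) / S t = -(β * I t) := by
      field_simp
    rw [hdiv]
    linear_combination (-(I t)) * hβρ
  have hWconst : ∀ t, 0 ≤ t → t ≤ v →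
      S t + I t - ρ * Real.log (S t) = x + y - ρ * Real.log x := by
    intro t ht0 htv
    have hWcont : ContinuousOn (fun u => S u + I u - ρ * Real.log (S u)) (Icc 0 v) :=
      ((hSc'.add (hIcont.mono fun s hs => hs.1)).sub
        (continuousOn_const.mul (hSc'.log fun s hs => (hSpos s hs.1 hs.2).ne')))
    have hdiff : DifferentiableOn ℝ (fun u => S u + I u - ρ * Real.log (S u))
        (interior (Icc 0 v)) := by
      rw [interior_Icc]
      exact fun s hs => (hWd s hs).differentiableAt.differentiableWithinAt
    have h1 := monotoneOn_of_deriv_nonneg (convex_Icc 0 v) hWcont hdiff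
      (fun s hs => by rw [interior_Icc] at hs; rw [(hWd s hs).deriv])
    have h2 := antitoneOn_of_deriv_nonpos (convex_Icc 0 v) hWcont hdiff
      (fun s hs => by rw [interior_Icc] at hs; rw [(hWd s hs).deriv])
    have ha := h1 ⟨le_refl 0, hv0⟩ ⟨ht0, htv⟩ ht0
    have hb := h2 ⟨le_refl 0, hv0⟩ ⟨ht0, htv⟩ ht0
    have : S t + I t - ρ * Real.log (S t) = S 0 + I 0 - ρ * Real.log (S 0) := le_antisymm hb ha
    rw [this, hS0, hI0]
  have hI_eq : ∀ t, 0 ≤ t → t ≤ v →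
      I t = x + y - S t + ρ * (Real.log (S t) - Real.log x) := by
    intro t ht0 htv
    have := hWconst t ht0 htv
    linarith [this]
  -- constants
  set L : ℝ := Real.log x - Real.log ρ with hLdef
  have hL : 0 < L := by rw [hLdef]; exact sub_pos.2 (Real.log_lt_log hρ hx)
  clear_value L
  have hρL : ρ * L < x - ρ := by
    have h1 : Real.log (x / ρ) < x / ρ - 1 :=
      Real.log_lt_sub_one_of_pos (div_pos hx0 hρ) (((one_lt_div hρ).2 hx).ne')
    rw [Real.log_div hx0.ne' hρ.ne'] at h1
    have h2 : ρ * L < ρ * (x / ρ - 1) := by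
      rw [hLdef]; exact mul_lt_mul_of_pos_left h1 hρ
    have h3 : ρ * (x / ρ - 1) = x - ρ := by field_simp
    linarith
  have hk' : (0:ℝ) < 1 - ρ * L / (x - ρ) := by
    rw [sub_pos, div_lt_one hxρ]; exact hρL
  set k' : ℝ := 1 - ρ * L / (x - ρ) with hk'def
  set A' : ℝ := y + x * k' with hA'def
  have hA'pos : 0 < A' := by rw [hA'def]; nlinarith [mul_pos hx0 hk']
  have hA'x : A' - k' * x = y := by rw [hA'def]; ring
  have hA'ρ : A' - k' * ρ = x + y - ρ - ρ * L := by
    rw [hA'def, hk'def]; field_simp; ring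
  have hexp : ∀ s : ℝ, A' - k' * s = x + y - s - ρ * ((x - s) / (x - ρ)) * L := by
    intro s; rw [hA'def, hk'def]; field_simp; ring
  clear_value k' A'
  -- upper and lower linear bounds on I in terms of S
  have hub : ∀ t, 0 ≤ t → t ≤ v → I t ≤ (x + y - ρ) - (x - ρ) / x * S t := by
    intro t ht0 htv
    have hSp := hSpos t ht0 htv
    have hlog : Real.log (S t) - Real.log x ≤ S t / x - 1 := by
      have h1 := Real.log_le_sub_one_of_pos (div_pos hSp hx0)
      rwa [Real.log_div hSp.ne' hx0.ne'] at h1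
    have heq : (x + y - ρ) - (x - ρ) / x * S t
        = x + y - S t + ρ * (S t / x - 1) := by field_simp; ring
    rw [hI_eq t ht0 htv, heq]
    nlinarith [mul_le_mul_of_nonneg_left hlog hρ.le]
  have hden : ∀ t, 0 ≤ t → t ≤ v → 0 < (x + y - ρ) - (x - ρ) / x * S t :=
    fun t ht0 htv => lt_of_lt_of_le (hIpos t ht0 htv) (hub t ht0 htv)
  have hlb : ∀ t, 0 ≤ t → t ≤ v → A' - k' * S t ≤ I t := by
    intro t ht0 htv
    have hSt := hSmem t ht0 htv
    have hSx := hSle t ht0 htv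
    have ha : 0 ≤ (x - S t) / (x - ρ) := div_nonneg (by linarith) hxρ.le
    have hb : 0 ≤ (S t - ρ) / (x - ρ) := div_nonneg (by linarith) hxρ.le
    have hab : (x - S t) / (x - ρ) + (S t - ρ) / (x - ρ) = 1 := by
      rw [← add_div, show x - S t + (S t - ρ) = x - ρ by ring]
      exact div_self hxρ.ne'
    have hcon := (strictConcaveOn_log_Ioi.concaveOn).2 (mem_Ioi.2 hρ) (mem_Ioi.2 hx0) ha hb hab
    rw [smul_eq_mul, smul_eq_mul, smul_eq_mul, smul_eq_mul] at hcon
    rw [show (x - S t) / (x - ρ) * ρ + (S t - ρ) / (x - ρ) * x = S t from by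
      field_simp; ring] at hcon
    have h3 : Real.log x - Real.log (S t) ≤ (x - S t) / (x - ρ) * L := by
      have hb1 : (S t - ρ) / (x - ρ) = 1 - (x - S t) / (x - ρ) := by linarith
      rw [hb1] at hcon
      have hL' : (x - S t) / (x - ρ) * L
          = (x - S t) / (x - ρ) * Real.log x - (x - S t) / (x - ρ) * Real.log ρ := by
        rw [hLdef]; ring
      rw [hL']
      nlinarith [hcon]
    rw [hI_eq t ht0 htv, hexp (S t)]
    nlinarith [mul_le_mul_of_nonneg_left h3 hρ.le]
  have hdenA' : ∀ t, 0 ≤ t → t ≤ v → 0 < A' - k' * S t := by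
    intro t ht0 htv
    have h1 : k' * S t ≤ k' * x := mul_le_mul_of_nonneg_left (hSle t ht0 htv) hk'.le
    linarith [hA'x]
  have hdS' : ∀ t ∈ Ioo (0:ℝ) v, HasDerivAt S (-(β * S t * I t)) t :=
    fun t ht => (hD t ht.1.le).1.hasDerivAt (Ici_mem_nhds ht.1)
  have hkey₁ := sir_anti_aux β A' k' v S I hβ hA'pos hv0 hdS' hSc'
    (fun t ht => hSpos t ht.1 ht.2) (fun t ht => hdenA' t ht.1 ht.2)
    (fun t ht => hlb t ht.1 ht.2)
  rw [hS0, hSv, hA'x, hA'ρ] at hkey₁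
  have hApos : (0:ℝ) < x + y - ρ := by linarith
  have hkey₂ := sir_mono_aux β (x + y - ρ) ((x - ρ) / x) v S I hβ hApos hv0 hdS' hSc'
    (fun t ht => hSpos t ht.1 ht.2) (fun t ht => hden t ht.1 ht.2)
    (fun t ht => hub t ht.1 ht.2)
  rw [hS0, hSv] at hkey₂
  rw [show x + y - ρ - (x - ρ) / x * x = y from by field_simp; ring] at hkey₂
  constructor
  · rw [show x - ρ + y - ρ * L = x + y - ρ - ρ * L from by ring]
    rw [le_div_iff₀ (mul_pos hβ hA'pos)]
    nlinarith [hkey₁]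
  · have harg : x - ρ + y + ρ * (γ / (β * x) - 1) = x + y - ρ - (x - ρ) / x * ρ := by
      rw [← hβρ]
      field_simp
      ring
    rw [harg, div_le_iff₀ (mul_pos hβ (show (0:ℝ) < x - ρ + y by linarith))]
    nlinarith [hkey₂]
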